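/- For any nonempty subset Ṽ of the vertices of a cactus digraph G, there exists a unique minimum sub-cactus-or-vertex subgraph containing Ṽ: the intersection of all sub-cactus digraphs of G containing Ṽ is the smallest such subgraph (it is a sub-cactus digraph, or a single vertex in case Ṽ = {v} with v a connecting point). -/

import Mathlib

structure DirGraph (V : Type) where
  Adj : V → V → Prop
  loopless : ∀ v, ¬ Adj v v

namespace DirGraph

variable {V V' : Type}

/-- A walk is a nonempty list of vertices with consecutive arcs. -/
def IsWalk (G : DirGraph V) : List V → Prop
  | [] => False
  | [_] => True
  | a :: b :: l => G.Adj a b ∧ G.IsWalk (b :: l)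

def IsWalkFromTo (G : DirGraph V) (p : List V) (x y : V) : Prop :=
  G.IsWalk p ∧ p.head? = some x ∧ p.getLast? = some y

def StronglyConnected (G : DirGraph V) : Prop :=
  ∀ x y : V, ∃ p, G.IsWalkFromTo p x y

def IsSimplePath (G : DirGraph V) (p : List V) : Prop :=
  G.IsWalk p ∧ p.Nodup

def IsSimplePathFromTo (G : DirGraph V) (p : List V) (x y : V) : Prop :=
  G.IsSimplePath p ∧ p.head? = some x ∧ p.getLast? = some y

/-- The arcs of a walk given as a list of vertices. -/
def arcs (p : List V) : List (V × V) := p.zip p.tail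

/-- The preterminal (second-to-last) vertex of a path. -/
def preterminal (p : List V) : Option V := p.dropLast.getLast?

/-- A simple cycle: a closed walk whose vertices are distinct except for the
repeated endpoint. -/
def IsSimpleCycle (G : DirGraph V) (p : List V) : Prop :=
  G.IsWalk p ∧ 2 ≤ p.length ∧ p.head? = p.getLast? ∧ p.dropLast.Nodup

/-- Two cycles are equal as cycles when they have the same set of arcs. -/
def CycleEquiv (p q : List V) : Prop :=
  ∀ a : V × V, a ∈ arcs p ↔ a ∈ arcs q

/-- Each arc lies in exactly one simple cycle (up to arc-set equality). -/
def CactusArcCond (G : DirGraph V) : Prop :=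
  ∀ x y, G.Adj x y →
    (∃ p, G.IsSimpleCycle p ∧ (x, y) ∈ arcs p) ∧
    (∀ p q, G.IsSimpleCycle p → (x, y) ∈ arcs p →
      G.IsSimpleCycle q → (x, y) ∈ arcs q → CycleEquiv p q)

/-- A cactus digraph: strongly connected and each arc lies in exactly one
simple cycle. -/
def IsCactus (G : DirGraph V) : Prop :=
  G.StronglyConnected ∧ G.CactusArcCond

noncomputable def inDeg (G : DirGraph V) (v : V) : ℕ := Nat.card {u // G.Adj u v}
noncomputable def outDeg (G : DirGraph V) (v : V) : ℕ := Nat.card {u // G.Adj v u}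

/-- A connecting point: a vertex shared by two distinct simple cycles. -/
def IsConnectingPoint (G : DirGraph V) (v : V) : Prop :=
  ∃ p q, G.IsSimpleCycle p ∧ G.IsSimpleCycle q ∧ ¬ CycleEquiv p q ∧ v ∈ p ∧ v ∈ q

/-- An expansion of digraphs. -/
structure IsExpansion (G' : DirGraph V') (G : DirGraph V) (φ : V' → V) : Prop where
  map_adj : ∀ ⦃x y⦄, G'.Adj x y → G.Adj (φ x) (φ y)
  vert_surj : Function.Surjective φ
  arc_surj : ∀ ⦃x y⦄, G.Adj x y → ∃ x' y', G'.Adj x' y' ∧ φ x' = x ∧ φ y' = y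
  lift : ∀ ⦃x y⦄, G.Adj x y → ∀ y', φ y' = y → ∃! x', G'.Adj x' y' ∧ φ x' = x

/-- A doubly bidirectionally connected pair. -/
def Dbcp (G : DirGraph V) (p q : V) : Prop :=
  p ≠ q ∧
  (∃ P Q, G.IsSimplePathFromTo P p q ∧ G.IsSimplePathFromTo Q p q ∧
    preterminal P ≠ preterminal Q) ∧
  (∃ P Q, G.IsSimplePathFromTo P q p ∧ G.IsSimplePathFromTo Q q p ∧
    preterminal P ≠ preterminal Q)

/-- Subgraph of a digraph: a vertex subset together with a subrelation of arcs
supported on it. -/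
structure Subgraph (G : DirGraph V) where
  verts : Set V
  Adj : V → V → Prop
  adj_sub : ∀ ⦃x y⦄, Adj x y → G.Adj x y
  mem_left : ∀ ⦃x y⦄, Adj x y → x ∈ verts
  mem_right : ∀ ⦃x y⦄, Adj x y → y ∈ verts

def Subgraph.toDirGraph {G : DirGraph V} (H : Subgraph G) : DirGraph V :=
  ⟨H.Adj, fun v h => G.loopless v (H.adj_sub h)⟩

/-- A sub-cactus digraph: a nonempty subgraph that is strongly connected (on
its vertex set) and in which each arc lies in exactly one simple cycle. -/
def Subgraph.IsCactus {G : DirGraph V} (H : Subgraph G) : Prop :=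
  H.verts.Nonempty ∧
  (∀ x ∈ H.verts, ∀ y ∈ H.verts, ∃ p, H.toDirGraph.IsWalkFromTo p x y) ∧
  H.toDirGraph.CactusArcCond

def Subgraph.inter {G : DirGraph V} (H K : Subgraph G) : Subgraph G where
  verts := H.verts ∩ K.verts
  Adj x y := H.Adj x y ∧ K.Adj x y
  adj_sub := fun _ _ h => H.adj_sub h.1
  mem_left := fun _ _ h => ⟨H.mem_left h.1, K.mem_left h.2⟩
  mem_right := fun _ _ h => ⟨H.mem_right h.1, K.mem_right h.2⟩

def Subgraph.le {G : DirGraph V} (H K : Subgraph G) : Prop :=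
  H.verts ⊆ K.verts ∧ ∀ ⦃x y⦄, H.Adj x y → K.Adj x y

/-- The single-vertex subgraph. -/
def singleVert (G : DirGraph V) (v : V) : Subgraph G where
  verts := {v}
  Adj _ _ := False
  adj_sub := by intro _ _ h; exact h.elim
  mem_left := by intro _ _ h; exact h.elim
  mem_right := by intro _ _ h; exact h.elim

/-- The intersection of all sub-cactus digraphs of `G` containing `W`. -/
def CsubOf (G : DirGraph V) (W : Set V) : Subgraph G where
  verts := {x | ∀ H : Subgraph G, H.IsCactus → W ⊆ H.verts → x ∈ H.verts}
  Adj x y := G.Adj x y ∧ ∀ H : Subgraph G, H.IsCactus → W ⊆ H.verts → H.Adj x y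
  adj_sub := fun _ _ h => h.1
  mem_left := fun _ _ h H hH hW => H.mem_left (h.2 H hH hW)
  mem_right := fun _ _ h H hH hW => H.mem_right (h.2 H hH hW)

open Classical in
/-- `C G r v`: the minimum sub-cactus digraph containing `{r, v}` (and the
single vertex `{r}` when `v = r`). -/
noncomputable def C (G : DirGraph V) (r v : V) : Subgraph G :=
  if v = r then singleVert G r else CsubOf G {r, v}

/-- The preorder on vertices of the rooted cactus digraph `(G, r)`:
`v ≼ w ↔ C(v) ⊆ C(w)`. -/
def pre (G : DirGraph V) (r v w : V) : Prop :=
  Subgraph.le (C G r v) (C G r w)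

end DirGraph

namespace DirGraph

variable {V : Type} {G : DirGraph V}

lemma arcs_cons₂ (a b : V) (l : List V) : arcs (a :: b :: l) = (a, b) :: arcs (b :: l) := rfl

lemma mem_tail_of_arcs {u v : V} : ∀ {p : List V}, (u, v) ∈ arcs p → v ∈ p.tail
  | [], h => by simp [arcs] at h
  | [_], h => by simp [arcs] at h
  | a :: b :: l, h => by
    rw [arcs_cons₂] at h
    rcases List.mem_cons.1 h with h | h
    · cases h; simp
    · exact List.mem_cons_of_mem _ (mem_tail_of_arcs h)

lemma mem_of_getLast? {l : List V} {x : V} (h : l.getLast? = some x) : x ∈ l := by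
  obtain ⟨ys, rfl⟩ := List.getLast?_eq_some_iff.1 h; simp

lemma arcs_mem_iff {u v : V} {p : List V} :
    (u, v) ∈ arcs p ↔ ∃ l1 l2, p = l1 ++ u :: v :: l2 := by
  constructor
  · intro h
    induction p with
    | nil => simp [arcs] at h
    | cons a t ih =>
      match t, h with
      | [], h => simp [arcs] at h
      | b :: l, h =>
        rw [arcs_cons₂] at h
        rcases List.mem_cons.1 h with h | h
        · obtain ⟨rfl, rfl⟩ := Prod.mk.injEq .. ▸ h
          exact ⟨[], l, by simp_all⟩
        · obtain ⟨l1, l2, hl⟩ := ih h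
          exact ⟨a :: l1, l2, by simp [hl]⟩
  · rintro ⟨l1, l2, rfl⟩
    induction l1 with
    | nil => rw [List.nil_append, arcs_cons₂]; exact List.mem_cons_self
    | cons a t ih =>
      match t, ih with
      | [], ih => rw [List.cons_append, List.nil_append, arcs_cons₂]; exact List.mem_cons_of_mem _ ih
      | b :: l, ih =>
        rw [List.cons_append] at ih ⊢
        rw [List.cons_append, arcs_cons₂]
        exact List.mem_cons_of_mem _ ih

lemma isWalk_iff {p : List V} :
    G.IsWalk p ↔ p ≠ [] ∧ ∀ a ∈ arcs p, G.Adj a.1 a.2 := by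
  induction p with
  | nil => simp [IsWalk]
  | cons a t ih =>
    match t with
    | [] => simp [IsWalk, arcs]
    | b :: l =>
      rw [arcs_cons₂]
      constructor
      · rintro ⟨h1, h2⟩
        refine ⟨by simp, ?_⟩
        intro x hx
        rcases List.mem_cons.1 hx with rfl | hx
        · exact h1
        · exact ((ih.1 h2).2 x hx)
      · rintro ⟨-, h⟩
        exact ⟨h _ List.mem_cons_self, ih.2 ⟨by simp, fun x hx => h x (List.mem_cons_of_mem _ hx)⟩⟩

lemma isWalk_prefix {s t : List V} (h : G.IsWalk (s ++ t)) (hs : s ≠ []) : G.IsWalk s := by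
  rw [isWalk_iff] at h ⊢
  refine ⟨hs, fun a ha => h.2 a ?_⟩
  obtain ⟨l1, l2, rfl⟩ := arcs_mem_iff.1 ha
  exact arcs_mem_iff.2 ⟨l1, l2 ++ t, by simp⟩

lemma isWalk_suffix {s t : List V} (h : G.IsWalk (s ++ t)) (ht : t ≠ []) : G.IsWalk t := by
  rw [isWalk_iff] at h ⊢
  refine ⟨ht, fun a ha => h.2 a ?_⟩
  obtain ⟨l1, l2, rfl⟩ := arcs_mem_iff.1 ha
  exact arcs_mem_iff.2 ⟨s ++ l1, l2, by simp⟩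

lemma isWalk_glue {p q : List V} {v : V} (h1 : G.IsWalk (p ++ [v])) (h2 : G.IsWalk (v :: q)) :
    G.IsWalk (p ++ v :: q) := by
  induction p with
  | nil => simpa using h2
  | cons a t ih =>
    match t with
    | [] =>
      obtain ⟨hav, -⟩ := h1
      exact ⟨hav, h2⟩
    | b :: l =>
      obtain ⟨hab, h1'⟩ := h1
      exact ⟨hab, ih h1'⟩

lemma walk_mono {H : Subgraph G} {p : List V} (h : H.toDirGraph.IsWalk p) : G.IsWalk p := by
  rw [isWalk_iff] at h ⊢
  exact ⟨h.1, fun a ha => H.adj_sub (h.2 a ha)⟩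

lemma adj_of_arcs_of_walk {p : List V} (h : G.IsWalk p) {u v : V} (ha : (u, v) ∈ arcs p) :
    G.Adj u v := (isWalk_iff.1 h).2 _ ha

/-- Extraction of a simple path from a walk. -/
lemma exists_simplePath_aux : ∀ n (p : List V), p.length ≤ n → G.IsWalk p →
    ∃ q, G.IsWalk q ∧ q.Nodup ∧ q.head? = p.head? ∧ q.getLast? = p.getLast? ∧ q ⊆ p := by
  intro n
  induction n with
  | zero => intro p hp hw; rw [isWalk_iff] at hw; cases hw.1 (List.eq_nil_of_length_eq_zero (Nat.le_zero.1 hp))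
  | succ n ih =>
    rintro (_ | ⟨a, t⟩) hp hw
    · exact (isWalk_iff.1 hw).1 rfl |>.elim
    · by_cases hat : a ∈ t
      · obtain ⟨t1, t2, rfl⟩ := List.append_of_mem hat
        have hw' : G.IsWalk (a :: t2) := isWalk_suffix (s := a :: t1) (by simpa using hw) (by simp)
        have hlen : (a :: t2).length ≤ n := by
          simp only [List.length_cons, List.length_append] at hp ⊢
          omega
        obtain ⟨q, h1, h2, h3, h4, h5⟩ := ih _ hlen hw'
        refine ⟨q, h1, h2, h3, ?_, fun x hx => ?_⟩
        · rw [h4, show a :: (t1 ++ a :: t2) = (a :: t1) ++ (a :: t2) by simp,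
            List.getLast?_append_of_ne_nil _ (by simp)]
        · have := h5 hx
          rcases List.mem_cons.1 this with rfl | h
          · simp
          · simp [h]
      · rcases t with _ | ⟨b, l⟩
        · exact ⟨[a], trivial, by simp, rfl, rfl, by simp⟩
        · obtain ⟨hab, hw'⟩ := hw
          obtain ⟨q, h1, h2, h3, h4, h5⟩ := ih (b :: l) (by simp at hp ⊢; omega) hw'
          obtain ⟨q', rfl⟩ : ∃ q', q = b :: q' := by
            cases q with
            | nil => simp at h3
            | cons c q' =>
              simp only [List.head?_cons, Option.some.injEq] at h3
              exact ⟨q', by rw [h3]⟩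
          have haq : a ∉ b :: q' := fun h => hat (h5 h)
          refine ⟨a :: b :: q', ⟨hab, h1⟩, List.nodup_cons.2 ⟨haq, h2⟩, rfl, ?_, ?_⟩
          · rw [show a :: b :: q' = [a] ++ (b :: q') by simp,
              List.getLast?_append_of_ne_nil _ (by simp), h4,
              show a :: b :: l = [a] ++ (b :: l) by simp,
              List.getLast?_append_of_ne_nil _ (by simp)]
          · intro x hx
            rcases List.mem_cons.1 hx with rfl | h
            · simp
            · exact List.mem_cons_of_mem _ (h5 h)

lemma exists_simplePath {x y : V} {p : List V} (h : G.IsWalkFromTo p x y) :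
    ∃ q, G.IsSimplePathFromTo q x y ∧ q ⊆ p := by
  obtain ⟨q, h1, h2, h3, h4, h5⟩ := exists_simplePath_aux p.length p le_rfl h.1
  exact ⟨q, ⟨⟨h1, h2⟩, h3.trans h.2.1, h4.trans h.2.2⟩, h5⟩

open Classical in
/-- Split a list at the first element satisfying a predicate. -/
lemma first_split {π : V → Prop} : ∀ {l : List V}, (∃ v ∈ l, π v) →
    ∃ l1 a l2, l = l1 ++ a :: l2 ∧ π a ∧ ∀ v ∈ l1, ¬ π v := by
  intro l h
  induction l with
  | nil => simp at h
  | cons a t ih =>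
    by_cases ha : π a
    · exact ⟨[], a, t, by simp, ha, by simp⟩
    · obtain ⟨v, hv, hπ⟩ := h
      rcases List.mem_cons.1 hv with rfl | hv
      · exact absurd hπ ha
      · obtain ⟨l1, b, l2, rfl, h1, h2⟩ := ih ⟨v, hv, hπ⟩
        refine ⟨a :: l1, b, l2, by simp, h1, ?_⟩
        intro u hu
        rcases List.mem_cons.1 hu with rfl | hu
        · exact ha
        · exact h2 u hu

lemma arcs_target_unique {u w : V} : ∀ {l1 l2 : List V},
    (u, w) ∈ arcs (l1 ++ w :: l2) → w ∉ l1 → w ∉ l2 → some u = l1.getLast? := by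
  intro l1
  induction l1 with
  | nil =>
    intro l2 h h1 h2
    exfalso
    rw [List.nil_append] at h
    exact h2 (mem_tail_of_arcs h)
  | cons a t ih =>
    intro l2 h h1 h2
    rcases t with _ | ⟨b, t'⟩
    · rw [List.singleton_append, arcs_cons₂] at h
      rcases List.mem_cons.1 h with h | h
      · obtain ⟨rfl, -⟩ : u = a ∧ w = w := by simpa using h
        simp
      · exact absurd (mem_tail_of_arcs h) (by simpa using h2)
    · rw [List.cons_append, List.cons_append, arcs_cons₂] at h
      rcases List.mem_cons.1 h with h | h
      · exfalso
        obtain ⟨-, rfl⟩ : u = a ∧ w = b := by simpa using h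
        exact h1 (by simp)
      · have := ih (by simpa using h) (fun hc => h1 (List.mem_cons_of_mem _ hc)) h2
        rw [this, List.getLast?_cons_cons]

lemma simplePath_self {x : V} {p : List V} (h : G.IsSimplePathFromTo p x x) : p = [x] := by
  obtain ⟨⟨hw, hnd⟩, hh, hl⟩ := h
  rcases p with _ | ⟨a, t⟩
  · simp at hh
  · simp only [List.head?_cons, Option.some.injEq] at hh
    rcases t with _ | ⟨b, t'⟩
    · rw [hh]
    · exfalso
      have hx : x ∈ b :: t' := by
        rw [show a :: b :: t' = [a] ++ (b :: t') by simp,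
          List.getLast?_append_of_ne_nil _ (by simp)] at hl
        exact mem_of_getLast? hl
      exact (List.nodup_cons.1 hnd).1 (hh ▸ hx)

/-- The key cycle construction: a simple path `P` ending at `w`, a simple walk
`w :: R'` returning into `P`, yield a simple cycle through `w` whose unique arc
into `w` is the last arc of `P`, and containing the arc from `w` to the second
vertex of the return path. -/
lemma cycle_construction {P R' : List V} {w e : V}
    (hPw : G.IsWalk P) (hPnd : P.Nodup) (hPl : P.getLast? = some w)
    (hRw : G.IsWalk (w :: R')) (hRnd : (w :: R').Nodup)
    (hhead : R'.head? = some e)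
    (hmeet : ∃ v ∈ R', v ∈ P) :
    ∃ D, G.IsSimpleCycle D ∧ (w, e) ∈ arcs D ∧
      (∃ c, (c, w) ∈ arcs D ∧ some c = P.dropLast.getLast?) ∧
      (∀ u, (u, w) ∈ arcs D → some u = P.dropLast.getLast?) := by
  classical
  obtain ⟨R1, r1, R2, hR'eq, hr1P, hR1⟩ := first_split hmeet
  have hwR' : w ∉ R' := (List.nodup_cons.1 hRnd).1
  have hr1w : r1 ≠ w := fun h => hwR' (h ▸ (hR'eq ▸ (by simp : r1 ∈ R1 ++ r1 :: R2)))
  -- decompose P at r1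
  obtain ⟨A, B, hPeq⟩ := List.append_of_mem hr1P
  have hBw : (r1 :: B).getLast? = some w := by
    rw [hPeq, List.getLast?_append_of_ne_nil _ (by simp)] at hPl
    exact hPl
  have hBne : B ≠ [] := by
    rintro rfl
    simp at hBw
    exact hr1w hBw
  have hBl : B.getLast? = some w := by
    rw [show r1 :: B = [r1] ++ B by simp, List.getLast?_append_of_ne_nil _ hBne] at hBw
    exact hBw
  obtain ⟨B', rfl⟩ := List.getLast?_eq_some_iff.1 hBl
  -- P = A ++ r1 :: B' ++ [w]
  have hPeq' : P = (A ++ r1 :: B') ++ [w] := by simp [hPeq]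
  have hwnotin : w ∉ A ++ r1 :: B' := by
    have := hPeq' ▸ hPnd
    exact fun hc => (List.nodup_append.1 this).2.2 w hc w (by simp) rfl
  have hwB' : w ∉ r1 :: B' := fun hc => hwnotin (List.mem_append_right _ hc)
  have hwR1 : w ∉ R1 := fun hc => hwR' (hR'eq ▸ List.mem_append_left _ hc)
  -- the cycle
  refine ⟨(r1 :: B') ++ w :: (R1 ++ [r1]), ⟨?_, by simp; omega, ?_, ?_⟩, ?_, ?_, ?_⟩
  · -- walk
    refine isWalk_glue ?_ ?_
    · have : G.IsWalk (A ++ (r1 :: B' ++ [w])) := by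
        rw [show A ++ (r1 :: B' ++ [w]) = P by simp [hPeq]]
        exact hPw
      exact isWalk_suffix this (by simp)
    · have : G.IsWalk ((w :: R1 ++ [r1]) ++ R2) := by
        rw [show (w :: R1 ++ [r1]) ++ R2 = w :: R' by simp [hR'eq]]
        exact hRw
      exact isWalk_prefix this (by simp)
  · -- head? = getLast?
    rw [show (r1 :: B') ++ w :: (R1 ++ [r1]) = ((r1 :: B') ++ w :: R1) ++ [r1] by simp,
      List.getLast?_concat]
    simp
  · -- dropLast nodup
    rw [show (r1 :: B') ++ w :: (R1 ++ [r1]) = ((r1 :: B') ++ w :: R1) ++ [r1] by simp,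
      List.dropLast_concat]
    have hsubP : ∀ a ∈ r1 :: B', a ∈ P := by
      intro a ha
      rw [hPeq']
      exact List.mem_append_left _ (List.mem_append_right _ ha)
    rw [List.nodup_append]
    refine ⟨?_, ?_, ?_⟩
    · refine hPnd.sublist ?_
      rw [hPeq]
      refine List.Sublist.trans ?_ (List.sublist_append_right A _)
      exact (List.sublist_append_left B' [w]).cons₂ r1
    · refine List.nodup_cons.2 ⟨hwR1, List.Nodup.sublist ?_ (List.nodup_cons.1 hRnd).2⟩
      rw [hR'eq]
      exact List.sublist_append_left _ _
    · intro a ha b hc hab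
      subst hab
      rcases List.mem_cons.1 hc with rfl | hc
      · exact hwB' ha
      · exact hR1 a hc (hsubP a ha)
  · -- (w, e) ∈ arcs D
    have hh : (R1 ++ [r1]).head? = some e := by
      have h1 : R'.head? = (R1 ++ [r1]).head? := by
        rw [hR'eq]
        cases R1 <;> simp
      rw [← h1, hhead]
    obtain ⟨t, ht⟩ := List.head?_eq_some_iff.1 hh
    refine arcs_mem_iff.2 ⟨r1 :: B', t, ?_⟩
    rw [ht]
  · -- the arc (c, w) with c the preterminal of P
    obtain ⟨c, hc⟩ : ∃ c, (r1 :: B').getLast? = some c :=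
      ⟨(r1 :: B').getLast (by simp), List.getLast?_eq_getLast (by simp)⟩
    obtain ⟨l, hl⟩ := List.getLast?_eq_some_iff.1 hc
    have harc : ((r1 :: B') ++ w :: (R1 ++ [r1])) = l ++ c :: w :: (R1 ++ [r1]) := by
      rw [hl]; simp
    refine ⟨c, arcs_mem_iff.2 ⟨l, R1 ++ [r1], harc⟩, ?_⟩
    rw [hPeq', List.dropLast_concat, List.getLast?_append_of_ne_nil _ (by simp), hc]
  · -- uniqueness of the arc into w
    intro u hu
    have hw2 : w ∉ R1 ++ [r1] := by
      intro hc
      rcases List.mem_append.1 hc with hc | hc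
      · exact hwR1 hc
      · exact hr1w (List.mem_singleton.1 hc).symm
    have := arcs_target_unique (l1 := r1 :: B') (l2 := R1 ++ [r1]) hu hwB' hw2
    rw [this, hPeq', List.dropLast_concat, List.getLast?_append_of_ne_nil _ (by simp)]

/-- In a cactus digraph, two simple paths with the same endpoints have the same
preterminal vertex (in fact they are equal; this is the key step). -/
lemma core (hG : G.IsCactus) {x w : V} (hxw : x ≠ w) {P Q : List V}
    (hP : G.IsSimplePathFromTo P x w) (hQ : G.IsSimplePathFromTo Q x w)
    (hcd : preterminal P ≠ preterminal Q) : False := by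
  obtain ⟨⟨hPw, hPnd⟩, hPh, hPl⟩ := hP
  obtain ⟨⟨hQw, hQnd⟩, hQh, hQl⟩ := hQ
  -- a simple return path R from w to x
  obtain ⟨R0, hR0⟩ := hG.1 w x
  obtain ⟨R, ⟨⟨hRw, hRnd⟩, hRh, hRl⟩, -⟩ := exists_simplePath hR0
  obtain ⟨R', rfl⟩ := List.head?_eq_some_iff.1 hRh
  have hR'ne : R' ≠ [] := by
    rintro rfl
    simp at hRl
    exact hxw hRl.symm
  obtain ⟨e, R'', rfl⟩ : ∃ e R'', R' = e :: R'' := by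
    cases R' with
    | nil => exact absurd rfl hR'ne
    | cons e R'' => exact ⟨e, R'', rfl⟩
  have hxR' : x ∈ e :: R'' := by
    rw [show w :: e :: R'' = [w] ++ (e :: R'') by simp,
      List.getLast?_append_of_ne_nil _ (by simp)] at hRl
    exact mem_of_getLast? hRl
  have hmeetP : ∃ v ∈ e :: R'', v ∈ P := ⟨x, hxR', by
    obtain ⟨t, rfl⟩ := List.head?_eq_some_iff.1 hPh; simp⟩
  have hmeetQ : ∃ v ∈ e :: R'', v ∈ Q := ⟨x, hxR', by
    obtain ⟨t, rfl⟩ := List.head?_eq_some_iff.1 hQh; simp⟩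
  obtain ⟨D1, hD1c, hD1we, ⟨c, hcD1, hcP⟩, -⟩ :=
    cycle_construction hPw hPnd hPl hRw hRnd rfl hmeetP
  obtain ⟨D2, hD2c, hD2we, -, hD2uniq⟩ :=
    cycle_construction hQw hQnd hQl hRw hRnd rfl hmeetQ
  have hadj : G.Adj w e := hRw.1
  have hequiv : CycleEquiv D1 D2 := (hG.2 w e hadj).2 D1 D2 hD1c hD1we hD2c hD2we
  have hcD2 : (c, w) ∈ arcs D2 := (hequiv (c, w)).1 hcD1
  have := hD2uniq c hcD2
  exact hcd (hcP.symm.trans this)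

/-- Uniqueness of simple paths in a cactus digraph. -/
lemma path_unique_aux (hG : G.IsCactus) :
    ∀ n (p q : List V) (x y : V), p.length ≤ n →
      G.IsSimplePathFromTo p x y → G.IsSimplePathFromTo q x y → p = q := by
  intro n
  induction n with
  | zero =>
    intro p q x y hlen hp _
    rw [Nat.le_zero, List.length_eq_zero_iff] at hlen
    exact absurd (hlen ▸ hp.1.1) (by simp [IsWalk])
  | succ n ih =>
    intro p q x y hlen hp hq
    by_cases hxy : x = y
    · subst hxy
      rw [simplePath_self hp, simplePath_self hq]
    · obtain ⟨p', hp'⟩ := List.getLast?_eq_some_iff.1 hp.2.2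
      obtain ⟨q', hq'⟩ := List.getLast?_eq_some_iff.1 hq.2.2
      have hp'ne : p' ≠ [] := by
        rintro rfl
        rw [hp'] at hp
        exact hxy (Eq.symm (by simpa using hp.2.1))
      have hq'ne : q' ≠ [] := by
        rintro rfl
        rw [hq'] at hq
        exact hxy (Eq.symm (by simpa using hq.2.1))
      have hpre : preterminal p = p'.getLast? := by
        rw [preterminal, hp', List.dropLast_concat]
      have hqre : preterminal q = q'.getLast? := by
        rw [preterminal, hq', List.dropLast_concat]
      by_cases hcd : preterminal p = preterminal q
      · -- same preterminal: strip the last vertex and recurse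
        obtain ⟨c, hc⟩ : ∃ c, p'.getLast? = some c :=
          ⟨p'.getLast hp'ne, List.getLast?_eq_getLast hp'ne⟩
        have hd : q'.getLast? = some c := by rw [← hqre, ← hcd, hpre, hc]
        have hp'path : G.IsSimplePathFromTo p' x c := by
          refine ⟨⟨?_, ?_⟩, ?_, hc⟩
          · exact isWalk_prefix (hp' ▸ hp.1.1) hp'ne
          · exact (List.nodup_append.1 (hp' ▸ hp.1.2)).1
          · obtain ⟨a, t, rfl⟩ : ∃ a t, p' = a :: t := by
              cases p' with
              | nil => exact absurd rfl hp'ne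
              | cons a t => exact ⟨a, t, rfl⟩
            have hhead : p.head? = some a := by rw [hp']; rfl
            rw [← hp.2.1, hhead]
            rfl
        have hq'path : G.IsSimplePathFromTo q' x c := by
          refine ⟨⟨?_, ?_⟩, ?_, hd⟩
          · exact isWalk_prefix (hq' ▸ hq.1.1) hq'ne
          · exact (List.nodup_append.1 (hq' ▸ hq.1.2)).1
          · obtain ⟨a, t, rfl⟩ : ∃ a t, q' = a :: t := by
              cases q' with
              | nil => exact absurd rfl hq'ne
              | cons a t => exact ⟨a, t, rfl⟩
            have hhead : q.head? = some a := by rw [hq']; rfl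
            rw [← hq.2.1, hhead]
            rfl
        have hlen' : p'.length ≤ n := by
          have := hlen
          rw [hp'] at this
          simp at this
          omega
        rw [hp', hq', ih p' q' x c hlen' hp'path hq'path]
      · exact absurd (core hG hxy hp hq hcd) id

lemma path_unique (hG : G.IsCactus) {p q : List V} {x y : V}
    (hp : G.IsSimplePathFromTo p x y) (hq : G.IsSimplePathFromTo q x y) : p = q :=
  path_unique_aux hG p.length p q x y le_rfl hp hq

end DirGraph


open DirGraph in
/-- For a nonempty vertex set `W` of a cactus digraph, the intersection of all
sub-cactus digraphs containing `W` is the unique minimum subgraph containing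
`W`; it is itself a sub-cactus digraph, or a single vertex in case `W = {v}`
with `v` a connecting point. -/
theorem minimum_subcactus_of_set {V : Type} (G : DirGraph V) (hG : G.IsCactus)
    (W : Set V) (hW : W.Nonempty) :
    W ⊆ (CsubOf G W).verts ∧
    (∀ H : Subgraph G, H.IsCactus → W ⊆ H.verts → (CsubOf G W).le H) ∧
    ((CsubOf G W).IsCactus ∨
      ∃ v, W = {v} ∧ G.IsConnectingPoint v ∧
        (CsubOf G W).verts = {v} ∧ ∀ x y, ¬ (CsubOf G W).Adj x y) := by
  have hWsub : W ⊆ (CsubOf G W).verts := fun x hx H hH hHW => hHW hx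
  refine ⟨hWsub, fun H hH hHW => ⟨fun x hx => hx H hH hHW, fun x y h => h.2 H hH hHW⟩,
    Or.inl ⟨?_, ?_, ?_⟩⟩
  · obtain ⟨v, hv⟩ := hW
    exact ⟨v, hWsub hv⟩
  · -- strong connectivity on the vertex set
    intro x hx y hy
    by_cases hxy : x = y
    · subst hxy
      exact ⟨[x], trivial, rfl, rfl⟩
    · obtain ⟨p0, hp0⟩ := hG.1 x y
      obtain ⟨p, hp, -⟩ := exists_simplePath hp0
      refine ⟨p, ?_, hp.2.1, hp.2.2⟩
      rw [isWalk_iff]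
      refine ⟨(isWalk_iff.1 hp.1.1).1, ?_⟩
      rintro ⟨u, v⟩ ha
      refine ⟨adj_of_arcs_of_walk hp.1.1 ha, fun H hH hHW => ?_⟩
      obtain ⟨q0, hq0⟩ := hH.2.1 x (hx H hH hHW) y (hy H hH hHW)
      obtain ⟨q, hq, -⟩ := exists_simplePath hq0
      have hqG : G.IsSimplePathFromTo q x y := ⟨⟨walk_mono hq.1.1, hq.1.2⟩, hq.2.1, hq.2.2⟩
      have hpq : p = q := path_unique hG hp hqG
      exact adj_of_arcs_of_walk (G := H.toDirGraph) hq.1.1 (hpq ▸ ha)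
  · -- each arc in exactly one simple cycle
    intro u v hads
    have hGadj : G.Adj u v := hads.1
    constructor
    · obtain ⟨p, hpc, hpm⟩ := (hG.2 u v hGadj).1
      have harcs : ∀ a ∈ arcs p, (CsubOf G W).Adj a.1 a.2 := by
        rintro ⟨a, b⟩ ha
        refine ⟨adj_of_arcs_of_walk hpc.1 ha, fun H hH hHW => ?_⟩
        obtain ⟨qH, hqc, hqm⟩ := (hH.2.2 u v (hads.2 H hH hHW)).1
        have hqG : G.IsSimpleCycle qH := ⟨walk_mono hqc.1, hqc.2.1, hqc.2.2.1, hqc.2.2.2⟩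
        have hequiv := (hG.2 u v hGadj).2 p qH hpc hpm hqG hqm
        exact adj_of_arcs_of_walk (G := H.toDirGraph) hqc.1 ((hequiv (a, b)).1 ha)
      refine ⟨p, ⟨?_, hpc.2.1, hpc.2.2.1, hpc.2.2.2⟩, hpm⟩
      rw [isWalk_iff]
      exact ⟨(isWalk_iff.1 hpc.1).1, harcs⟩
    · intro p q hpc hpm hqc hqm
      have tocyc : ∀ r, (CsubOf G W).toDirGraph.IsSimpleCycle r → G.IsSimpleCycle r :=
        fun r hr => ⟨walk_mono hr.1, hr.2.1, hr.2.2.1, hr.2.2.2⟩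
      exact (hG.2 u v hGadj).2 p q (tocyc p hpc) hpm (tocyc q hqc) hqm
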